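/- Let g : ℝ → ℝ be continuously differentiable and strictly increasing with g(0) = 0, let 𝒞 > 0, let C_g > 0 satisfy g′(u) ≤ C_g for all u ∈ [0, 𝒞], and let p : ℝ → ℝ be continuous with 0 ≤ p(t) ≤ L for all t, where L > 0. Define F : ℝ → ℝ by F(s) = ∫_s^{s+𝒞} g(t − s) p(t) dt. Then F is Lipschitz continuous with constant L · max{g(𝒞), C_g 𝒞}, i.e. |F(s₁) − F(s₂)| ≤ L · max{g(𝒞), C_g 𝒞} · |s₁ − s₂| for all s₁, s₂ ∈ ℝ. -/

import Mathlib

open MeasureTheory intervalIntegral Set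

/-- A differentiable monotone function has nonnegative derivative. -/
lemma monotone_deriv_nonneg' {g : ℝ → ℝ} (hm : Monotone g)
    (hd : Differentiable ℝ g) (u : ℝ) : 0 ≤ deriv g u := by
  have h := hasDerivAt_iff_tendsto_slope.mp (hd u).hasDerivAt
  have h2 : Filter.Tendsto (slope g u) (nhdsWithin u (Set.Ioi u)) (nhds (deriv g u)) :=
    h.mono_left (nhdsWithin_mono u fun x hx => ne_of_gt hx)
  refine ge_of_tendsto h2 ?_
  filter_upwards [self_mem_nhdsWithin] with x hx
  have hx' : u < x := hx
  rw [slope_def_field]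
  exact div_nonneg (sub_nonneg.2 (hm hx'.le)) (sub_nonneg.2 hx'.le)

/-- The expected best-response cost `F s = ∫_s^{s+𝒞} g (t - s) p t dt` is
Lipschitz with constant `L * max (g 𝒞) (C_g * 𝒞)` whenever the threshold
density `p` is bounded by `L`. -/
theorem expected_BRC_lipschitz
    (g : ℝ → ℝ) (hg : ContDiff ℝ 1 g) (hg_mono : StrictMono g) (hg0 : g 0 = 0)
    (𝒞 : ℝ) (h𝒞 : 0 < 𝒞)
    (C_g : ℝ) (hCg : 0 < C_g) (hg' : ∀ u ∈ Set.Icc (0 : ℝ) 𝒞, deriv g u ≤ C_g)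
    (L : ℝ) (hL : 0 < L)
    (p : ℝ → ℝ) (hp_cont : Continuous p) (hp : ∀ t, 0 ≤ p t ∧ p t ≤ L)
    (F : ℝ → ℝ) (hF : ∀ s, F s = ∫ t in s..(s + 𝒞), g (t - s) * p t) :
    ∀ s₁ s₂ : ℝ, |F s₁ - F s₂| ≤ L * max (g 𝒞) (C_g * 𝒞) * |s₁ - s₂| := by
  set P : ℝ → ℝ := fun x => ∫ t in (0:ℝ)..x, p t with hPdef
  have hP : ∀ x, HasDerivAt P (p x) x := fun x =>
    (hp_cont.integral_hasStrictDerivAt 0 x).hasDerivAt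
  have hPcont : Continuous P :=
    continuous_iff_continuousAt.mpr fun x => (hP x).continuousAt
  have hgdiff : Differentiable ℝ g := hg.differentiable one_ne_zero
  have hg'c : Continuous (deriv g) := hg.continuous_deriv le_rfl
  have hderiv_nonneg : ∀ u, 0 ≤ deriv g u :=
    monotone_deriv_nonneg' hg_mono.monotone hgdiff
  have hg𝒞pos : 0 ≤ g 𝒞 := by
    have := hg_mono h𝒞
    rw [hg0] at this; linarith
  -- Key formula via integration by parts and a shift of variables
  have hkey : ∀ s : ℝ, F s = g 𝒞 * P (s + 𝒞) - ∫ u in (0:ℝ)..𝒞, deriv g u * P (u + s) := by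
    intro s
    rw [hF s]
    have hu : ∀ x ∈ Set.uIcc s (s + 𝒞), HasDerivAt (fun t => g (t - s)) (deriv g (x - s)) x := by
      intro x _
      simpa [Function.comp_def] using (hgdiff (x - s)).hasDerivAt.comp x ((hasDerivAt_id x).sub_const s)
    have hu' : IntervalIntegrable (fun x => deriv g (x - s)) volume s (s + 𝒞) :=
      (hg'c.comp (continuous_id.sub continuous_const)).intervalIntegrable _ _
    have hv' : IntervalIntegrable p volume s (s + 𝒞) := hp_cont.intervalIntegrable _ _
    have ibp := integral_mul_deriv_eq_deriv_mul hu (fun x _ => hP x) hu' hv'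
    rw [ibp]
    have hshift : (∫ x in s..(s + 𝒞), deriv g (x - s) * P x)
        = ∫ u in (0:ℝ)..𝒞, deriv g u * P (u + s) := by
      have := intervalIntegral.integral_comp_sub_right
        (f := fun u => deriv g u * P (u + s)) (a := s) (b := s + 𝒞) s
      simpa using this
    rw [hshift]
    simp [hg0]
  -- One-sided Lipschitz estimate
  have key : ∀ a b : ℝ, b ≤ a → |F a - F b| ≤ L * max (g 𝒞) (C_g * 𝒞) * (a - b) := by
    intro a b hba
    set δ := a - b with hδdef
    have hδ : 0 ≤ δ := by simp [hδdef]; linarith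
    -- bounds on P (x + a) - P (x + b)
    have hΔ : ∀ x : ℝ, 0 ≤ P (x + a) - P (x + b) ∧ P (x + a) - P (x + b) ≤ L * δ := by
      intro x
      have hle : x + b ≤ x + a := by linarith
      have heq : P (x + a) - P (x + b) = ∫ t in (x + b)..(x + a), p t := by
        rw [hPdef]
        exact (intervalIntegral.integral_interval_sub_left
          (hp_cont.intervalIntegrable _ _) (hp_cont.intervalIntegrable _ _))
      constructor
      · rw [heq]
        exact intervalIntegral.integral_nonneg hle fun t _ => (hp t).1
      · rw [heq]
        have hmono := intervalIntegral.integral_mono_on (μ := volume) hle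
          (hp_cont.intervalIntegrable _ _) (_root_.intervalIntegrable_const (c := L))
          (fun t _ => (hp t).2)
        rw [intervalIntegral.integral_const] at hmono
        calc (∫ t in (x + b)..(x + a), p t) ≤ (x + a - (x + b)) • L := hmono
        _ = L * δ := by simp [hδdef, smul_eq_mul]; ring
    -- decompose the difference
    have hint : ∀ s : ℝ, IntervalIntegrable (fun u => deriv g u * P (u + s)) volume 0 𝒞 :=
      fun s => (hg'c.mul (hPcont.comp (continuous_id.add continuous_const))).intervalIntegrable _ _
    have hdiff : F a - F b = g 𝒞 * (P (a + 𝒞) - P (b + 𝒞))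
        - ∫ u in (0:ℝ)..𝒞, deriv g u * (P (u + a) - P (u + b)) := by
      have hsplit : (∫ u in (0:ℝ)..𝒞, deriv g u * (P (u + a) - P (u + b)))
          = (∫ u in (0:ℝ)..𝒞, deriv g u * P (u + a))
            - ∫ u in (0:ℝ)..𝒞, deriv g u * P (u + b) := by
        rw [← intervalIntegral.integral_sub (hint a) (hint b)]
        congr 1; funext u; ring
      rw [hkey a, hkey b, hsplit]; ring
    set X := g 𝒞 * (P (a + 𝒞) - P (b + 𝒞)) with hXdef
    set Y := ∫ u in (0:ℝ)..𝒞, deriv g u * (P (u + a) - P (u + b)) with hYdef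
    have hΔ𝒞 := hΔ 𝒞
    rw [add_comm 𝒞 a, add_comm 𝒞 b] at hΔ𝒞
    have hX0 : 0 ≤ X := mul_nonneg hg𝒞pos hΔ𝒞.1
    have hX1 : X ≤ g 𝒞 * (L * δ) := mul_le_mul_of_nonneg_left hΔ𝒞.2 hg𝒞pos
    have hY0 : 0 ≤ Y :=
      intervalIntegral.integral_nonneg h𝒞.le fun u _ =>
        mul_nonneg (hderiv_nonneg u) (hΔ u).1
    have hY1 : Y ≤ 𝒞 * (C_g * (L * δ)) := by
      have hintY : IntervalIntegrable (fun u => deriv g u * (P (u + a) - P (u + b)))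
          volume 0 𝒞 := by
        apply Continuous.intervalIntegrable
        exact hg'c.mul ((hPcont.comp (continuous_id.add continuous_const)).sub
          (hPcont.comp (continuous_id.add continuous_const)))
      have hmono := intervalIntegral.integral_mono_on (μ := volume) h𝒞.le hintY
        (_root_.intervalIntegrable_const (c := C_g * (L * δ)))
        (fun u hu => mul_le_mul (hg' u hu) (hΔ u).2 (hΔ u).1 hCg.le)
      rw [intervalIntegral.integral_const] at hmono
      simpa [smul_eq_mul, mul_comm] using hmono
    have hmax1 : g 𝒞 ≤ max (g 𝒞) (C_g * 𝒞) := le_max_left _ _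
    have hmax2 : C_g * 𝒞 ≤ max (g 𝒞) (C_g * 𝒞) := le_max_right _ _
    rw [hdiff, abs_le]
    constructor
    · nlinarith [mul_nonneg hL.le hδ]
    · nlinarith [mul_nonneg hL.le hδ]
  intro s₁ s₂
  rcases le_total s₂ s₁ with h | h
  · rw [abs_of_nonneg (by linarith : (0:ℝ) ≤ s₁ - s₂)]
    exact key s₁ s₂ h
  · rw [abs_sub_comm (F s₁), abs_sub_comm s₁]
    rw [abs_of_nonneg (by linarith : (0:ℝ) ≤ s₂ - s₁)]
    exact key s₂ s₁ h
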